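/- Optimality of nd in the colorful quantitative Carathéodory lemma: for every d ≥ 1 and every n-vertex polytope K in R^d in general position, there exist nd−1 sets X_1, ..., X_{nd−1} ⊆ R^d whose convex hulls each contain K, but such that no colorful choice x_i ∈ X_i satisfies K ⊆ conv{x_1, ..., x_{nd−1}}. -/

import Mathlib

open Finset Module

lemma aux_eps {ι : Type*} (s : Finset ι) (a b : ι → ℝ) (hb : ∀ p ∈ s, 0 < b p) :
    ∃ ε > 0, ∀ p ∈ s, ε * |a p| < b p := by
  classical
  induction s using Finset.induction_on with
  | empty => exact ⟨1, one_pos, by simp⟩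
  | insert _ _ hp ih =>
    rename_i p s
    obtain ⟨ε, hε, h⟩ := ih (fun q hq => hb q (Finset.mem_insert_of_mem hq))
    have hbp : 0 < b p := hb p (Finset.mem_insert_self p s)
    refine ⟨min ε (b p / (|a p| + 1)), lt_min hε (div_pos hbp (by positivity)), ?_⟩
    intro q hq
    rcases Finset.mem_insert.1 hq with rfl | hq
    · calc min ε (b q / (|a q| + 1)) * |a q| ≤ (b q / (|a q| + 1)) * |a q| :=
            mul_le_mul_of_nonneg_right (min_le_right _ _) (abs_nonneg _)
      _ < b q := by
            rw [div_mul_eq_mul_div, div_lt_iff₀ (by positivity)]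
            nlinarith [abs_nonneg (a q)]
    · calc min ε (b p / (|a p| + 1)) * |a q| ≤ ε * |a q| :=
            mul_le_mul_of_nonneg_right (min_le_left _ _) (abs_nonneg _)
      _ < b q := h q hq

lemma exists_simplex_dirs (m : ℕ) (f : (Fin (m+1) → ℝ) →L[ℝ] ℝ) (hf : f ≠ 0) :
    ∃ u : Fin (m+1) → (Fin (m+1) → ℝ),
      (∀ k, f (u k) = 0) ∧ (∑ k, u k = 0) ∧
      ∀ c : Fin (m+1) → ℝ, ∑ k, c k • u k = 0 → ∀ k k', c k = c k' := by
  classical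
  have hsurj : Function.Surjective f := by
    obtain ⟨x, hx⟩ : ∃ x, f x ≠ 0 := by
      by_contra h
      push_neg at h
      exact hf (ContinuousLinearMap.ext fun x => by simp [h x])
    intro r
    refine ⟨(r / f x) • x, ?_⟩
    simp [map_smul, div_mul_cancel₀ _ hx]
  have hrank : finrank ℝ (LinearMap.ker f.toLinearMap) = m := by
    have h1 := LinearMap.finrank_range_add_finrank_ker f.toLinearMap
    have h2 : LinearMap.range f.toLinearMap = ⊤ := LinearMap.range_eq_top.2 hsurj
    rw [h2] at h1
    simp [Module.finrank_fin_fun] at h1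
    omega
  let b := finBasisOfFinrankEq ℝ (LinearMap.ker f.toLinearMap) hrank
  let b' : Fin m → (Fin (m+1) → ℝ) := fun j => (b j : Fin (m+1) → ℝ)
  have hb'li : LinearIndependent ℝ b' :=
    b.linearIndependent.map' (Submodule.subtype _) (Submodule.ker_subtype _)
  have hb'ker : ∀ j, f (b' j) = 0 := fun j => (b j).2
  refine ⟨Fin.snoc b' (-(∑ j, b' j)), ?_, ?_, ?_⟩
  · intro k
    refine Fin.lastCases ?_ ?_ k
    · simp [Fin.snoc_last, map_neg, map_sum, hb'ker]
    · intro j; simp [Fin.snoc_castSucc, hb'ker]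
  · rw [Fin.sum_univ_castSucc]
    simp [Fin.snoc_castSucc, Fin.snoc_last]
  · intro c hc k k'
    have h0 : ∑ j : Fin m, (c j.castSucc - c (Fin.last m)) • b' j = 0 := by
      have heq : ∑ j : Fin m, (c j.castSucc - c (Fin.last m)) • b' j
          = ∑ j : Fin m, c j.castSucc • b' j + c (Fin.last m) • (-(∑ j, b' j)) := by
        simp only [sub_smul, Finset.sum_sub_distrib, Finset.smul_sum, smul_neg, Finset.sum_neg_distrib]
        abel
      rw [heq]
      rw [Fin.sum_univ_castSucc] at hc
      simpa using hc
    have hz := Fintype.linearIndependent_iff.1 hb'li _ h0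
    have key : ∀ k, c k = c (Fin.last m) := by
      intro k
      refine Fin.lastCases rfl (fun j => sub_eq_zero.1 (hz j)) k
    rw [key k, key k']

set_option maxHeartbeats 2000000 in
/-- Optimality of `nd` in the colorful quantitative Carathéodory lemma:
for a full-dimensional polytope `K` with `n` distinct vertices in general position,
there are `nd - 1` sets whose convex hulls all contain `K` but such that no colorful
choice has `K` inside its convex hull. -/
theorem colorful_caratheodory_nd_optimal (d n : ℕ) (hd : 1 ≤ d) (hn : 1 ≤ n)
    (y : Fin n → (Fin d → ℝ)) (hy : Function.Injective y)
    (hvert : (convexHull ℝ (Set.range y)).extremePoints ℝ = Set.range y)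
    (hfull : affineSpan ℝ (Set.range y) = ⊤) :
    ∃ X : Fin (n * d - 1) → Set (Fin d → ℝ),
      (∀ i, convexHull ℝ (Set.range y) ⊆ convexHull ℝ (X i)) ∧
      ∀ x : Fin (n * d - 1) → (Fin d → ℝ), (∀ i, x i ∈ X i) →
        ¬ convexHull ℝ (Set.range y) ⊆ convexHull ℝ (Set.range x) := by
  classical
  -- n ≥ 2
  have hn2 : 2 ≤ n := by
    by_contra hcon
    push_neg at hcon
    interval_cases n
    have h1 : Set.range y = {y default} := Set.range_unique
    rw [h1] at hfull
    have hmem : (y default + fun _ => (1:ℝ)) ∈ affineSpan ℝ ({y default} : Set (Fin d → ℝ)) := by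
      rw [hfull]; trivial
    rw [AffineSubspace.mem_affineSpan_singleton] at hmem
    have := congrFun hmem ⟨0, hd⟩
    simp at this
  obtain ⟨m, rfl⟩ : ∃ m, d = m + 1 := ⟨d - 1, (Nat.succ_pred_eq_of_pos hd).symm⟩
  -- separating functionals at each vertex
  have hsep : ∀ l : Fin n, ∃ f : (Fin (m+1) → ℝ) →L[ℝ] ℝ,
      (∀ l', l' ≠ l → f (y l') < f (y l)) ∧ f ≠ 0 := by
    intro l
    have hnm : y l ∉ convexHull ℝ (Set.range y \ {y l}) := by
      intro hmem
      have hsub : Set.range y ⊆ convexHull ℝ (Set.range y \ {y l}) := by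
        rintro - ⟨l', rfl⟩
        by_cases h : y l' = y l
        · rw [h]; exact hmem
        · exact subset_convexHull ℝ _ ⟨⟨l', rfl⟩, h⟩
      have heq : convexHull ℝ (Set.range y) = convexHull ℝ (Set.range y \ {y l}) :=
        le_antisymm (convexHull_min hsub (convex_convexHull ℝ _))
          (convexHull_mono Set.diff_subset)
      have h1 : y l ∈ (convexHull ℝ (Set.range y)).extremePoints ℝ := by
        rw [hvert]; exact ⟨l, rfl⟩
      rw [heq] at h1
      exact (extremePoints_convexHull_subset h1).2 rfl
    have hcl : IsClosed (convexHull ℝ (Set.range y \ {y l})) :=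
      (((Set.finite_range y).subset Set.diff_subset).isCompact_convexHull (𝕜 := ℝ)).isClosed
    obtain ⟨f, t, hft, htl⟩ :=
      geometric_hahn_banach_closed_point (convex_convexHull ℝ _) hcl hnm
    have hflt : ∀ l', l' ≠ l → f (y l') < f (y l) := by
      intro l' hl'
      refine lt_trans (hft _ (subset_convexHull ℝ _ ⟨⟨l', rfl⟩, ?_⟩)) htl
      simp only [Set.mem_singleton_iff]
      exact fun h => hl' (hy h)
    refine ⟨f, hflt, ?_⟩
    obtain ⟨l'', hl''⟩ := Fintype.exists_ne_of_one_lt_card (by rw [Fintype.card_fin]; omega) l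
    intro h0
    have := hflt l'' hl''
    rw [h0] at this
    simp at this
  choose f hflt hf0 using hsep
  choose u hu_ker hu_sum hu_dep using fun l => exists_simplex_dirs m (f l) (hf0 l)
  -- choose ε
  obtain ⟨ε, hε, hεlt⟩ := aux_eps
    (Finset.univ.filter (fun p : Fin n × Fin n × Fin (m+1) => p.1 ≠ p.2.1))
    (fun p => f p.1 (u p.2.1 p.2.2))
    (fun p => f p.1 (y p.1) - f p.1 (y p.2.1))
    (by
      intro p hp
      rw [Finset.mem_filter] at hp
      exact sub_pos.2 (hflt p.1 p.2.1 (Ne.symm hp.2)))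
  set w : Fin n → Fin (m+1) → (Fin (m+1) → ℝ) := fun l k => y l + ε • u l k with hw
  have hfw_eq : ∀ l k, f l (w l k) = f l (y l) := by
    intro l k
    simp [hw, map_add, map_smul, hu_ker, smul_eq_mul]
  have hfw_lt : ∀ l l' k, l ≠ l' → f l (w l' k) < f l (y l) := by
    intro l l' k hne
    have h1 : ε * |f l (u l' k)| < f l (y l) - f l (y l') :=
      hεlt (l, l', k) (by simp [hne])
    have h2 : f l (w l' k) = f l (y l') + ε * f l (u l' k) := by
      simp [hw, map_add, map_smul, smul_eq_mul]
    have h3 : ε * f l (u l' k) ≤ ε * |f l (u l' k)| :=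
      mul_le_mul_of_nonneg_left (le_abs_self _) hε.le
    linarith
  have hu_inj : ∀ l, Function.Injective (u l) := by
    intro l k k' hkk'
    by_contra hne
    have hsum : ∑ j : Fin (m+1),
        ((if j = k then (1:ℝ) else 0) - (if j = k' then (1:ℝ) else 0)) • u l j = 0 := by
      simp only [sub_smul, Finset.sum_sub_distrib, ite_smul, one_smul, zero_smul,
        Finset.sum_ite_eq', Finset.mem_univ, if_true]
      rw [hkk', sub_self]
    have := hu_dep l _ hsum k k'
    simp only [if_pos rfl, if_neg hne, if_neg (Ne.symm hne)] at this
    norm_num at this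
  have hw_inj : Function.Injective (fun p : Fin n × Fin (m+1) => w p.1 p.2) := by
    rintro ⟨l, k⟩ ⟨l', k'⟩ h
    simp only at h
    by_cases hl : l = l'
    · subst hl
      have : ε • u l k = ε • u l k' := by
        have := h
        simp only [hw] at this
        exact add_left_cancel this
      have huu : u l k = u l k' := smul_right_injective _ (ne_of_gt hε) this
      rw [hu_inj l huu]
    · exfalso
      have h1 : f l (w l k) = f l (y l) := hfw_eq l k
      have h2 : f l (w l' k') < f l (y l) := hfw_lt l l' k' hl
      rw [← h] at h2
      rw [h1] at h2
      exact lt_irrefl _ h2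
  have hcentroid : ∀ l, ∑ k : Fin (m+1), (((m:ℝ)+1))⁻¹ • w l k = y l := by
    intro l
    have hcard : ∑ _k : Fin (m+1), (((m:ℝ)+1))⁻¹ • y l = y l := by
      rw [Finset.sum_const, Finset.card_univ, Fintype.card_fin]
      rw [← Nat.cast_smul_eq_nsmul ℝ, smul_smul]
      have : ((m+1 : ℕ) : ℝ) * ((m:ℝ)+1)⁻¹ = 1 := by
        push_cast
        rw [mul_inv_cancel₀ (by positivity)]
      rw [this, one_smul]
    calc ∑ k : Fin (m+1), (((m:ℝ)+1))⁻¹ • w l k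
        = ∑ k : Fin (m+1), ((((m:ℝ)+1))⁻¹ • y l + (((m:ℝ)+1))⁻¹ • ε • u l k) := by
          simp [hw, smul_add]
      _ = (∑ _k : Fin (m+1), (((m:ℝ)+1))⁻¹ • y l)
            + (((m:ℝ)+1))⁻¹ • ε • ∑ k : Fin (m+1), u l k := by
          rw [Finset.sum_add_distrib]
          congr 1
          rw [Finset.smul_sum, Finset.smul_sum]
      _ = y l := by rw [hcard, hu_sum, smul_zero, smul_zero, add_zero]
  refine ⟨fun _ => Set.range (fun p : Fin n × Fin (m+1) => w p.1 p.2), ?_, ?_⟩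
  · intro _
    refine convexHull_min ?_ (convex_convexHull ℝ _)
    rintro - ⟨l, rfl⟩
    exact mem_convexHull_of_exists_fintype (fun _ : Fin (m+1) => (((m:ℝ)+1))⁻¹) (w l)
      (fun _ => by positivity)
      (by
        rw [Finset.sum_const, Finset.card_univ, Fintype.card_fin, nsmul_eq_mul]
        push_cast
        rw [mul_inv_cancel₀ (by positivity)])
      (fun k => ⟨(l, k), rfl⟩) (hcentroid l)
  · intro x hx hsub
    set t : Finset (Fin (m+1) → ℝ) := Finset.image x Finset.univ with ht
    have hall : ∀ l k, w l k ∈ t := by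
      intro l
      have hyl : y l ∈ convexHull ℝ (t : Set (Fin (m+1) → ℝ)) := by
        have h1 : y l ∈ convexHull ℝ (Set.range x) :=
          hsub (subset_convexHull ℝ _ ⟨l, rfl⟩)
        have h2 : Set.range x = (t : Set _) := by
          rw [ht, Finset.coe_image, Finset.coe_univ, Set.image_univ]
        rwa [h2] at h1
      rw [Finset.convexHull_eq] at hyl
      obtain ⟨μ, hμ0, hμ1, hμc⟩ := hyl
      rw [Finset.centerMass_eq_of_sum_1 _ id hμ1] at hμc
      simp only [id_eq] at hμc
      have hclass : ∀ p ∈ t, ∃ l' k', p = w l' k' := by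
        intro p hp
        rw [ht, Finset.mem_image] at hp
        obtain ⟨i, -, rfl⟩ := hp
        obtain ⟨⟨l', k'⟩, hq⟩ := hx i
        exact ⟨l', k', hq.symm⟩
      have hle : ∀ p ∈ t, f l p ≤ f l (y l) := by
        intro p hp
        obtain ⟨l', k', rfl⟩ := hclass p hp
        by_cases h : l = l'
        · subst h; exact (hfw_eq l k').le
        · exact (hfw_lt l l' k' h).le
      have hzero : ∀ p ∈ t, f l p ≠ f l (y l) → μ p = 0 := by
        have hfy : (∑ p ∈ t, μ p * (f l (y l) - f l p)) = 0 := by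
          have h1 : f l (y l) = ∑ p ∈ t, μ p * f l p := by
            rw [← hμc, map_sum]
            simp [map_smul, smul_eq_mul]
          have h2 : ∑ p ∈ t, μ p * (f l (y l) - f l p)
              = (∑ p ∈ t, μ p) * f l (y l) - ∑ p ∈ t, μ p * f l p := by
            rw [Finset.sum_mul, ← Finset.sum_sub_distrib]
            apply Finset.sum_congr rfl
            intro p _
            ring
          rw [h2, hμ1, one_mul, ← h1, sub_self]
        intro p hp hne
        have h3 := (Finset.sum_eq_zero_iff_of_nonneg (fun q hq =>
          mul_nonneg (hμ0 q hq) (sub_nonneg.2 (hle q hq)))).1 hfy p hp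
        rcases mul_eq_zero.1 h3 with h | h
        · exact h
        · exact absurd (by linarith [sub_eq_zero.1 h] : f l p = f l (y l)) hne
      set lam : Fin (m+1) → ℝ := fun k => if w l k ∈ t then μ (w l k) else 0 with hlam
      have hwl_inj : Function.Injective (w l) := by
        intro k k' hk
        have := hw_inj (a₁ := (l, k)) (a₂ := (l, k')) hk
        exact congrArg Prod.snd this
      have key : ∀ {V : Type} [AddCommGroup V] [Module ℝ V] (G : (Fin (m+1) → ℝ) → V),
          ∑ k, lam k • G (w l k) = ∑ p ∈ t, μ p • G p := by
        intro V _ _ G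
        have e1 : ∑ k, lam k • G (w l k)
            = ∑ k, (if w l k ∈ t then μ (w l k) • G (w l k) else 0) := by
          apply Finset.sum_congr rfl
          intro k _
          by_cases hkt : w l k ∈ t <;> simp [hlam, hkt]
        rw [e1]
        rw [show (∑ k : Fin (m+1), if w l k ∈ t then μ (w l k) • G (w l k) else 0)
              = ∑ p ∈ Finset.image (w l) Finset.univ, (if p ∈ t then μ p • G p else 0) from
            (Finset.sum_image (f := fun p => if p ∈ t then μ p • G p else 0)
              (fun a _ b _ h => hwl_inj h)).symm]
        rw [Finset.sum_ite_mem]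
        apply Finset.sum_subset Finset.inter_subset_right
        intro p hp hnp
        have hμp : μ p = 0 := by
          apply hzero p hp
          obtain ⟨l', k', rfl⟩ := hclass p hp
          have hl' : l ≠ l' := by
            rintro rfl
            exact hnp (Finset.mem_inter.2
              ⟨Finset.mem_image.2 ⟨k', Finset.mem_univ _, rfl⟩, hp⟩)
          exact ne_of_lt (hfw_lt l l' k' hl')
        rw [hμp, zero_smul]
      have hlam1 : ∑ k, lam k = 1 := by
        have h := key (fun _ => (1:ℝ))
        simpa [smul_eq_mul, hμ1] using h
      have hlamu : ∑ k, lam k • u l k = 0 := by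
        have h1 := key id
        simp only [id_eq] at h1
        rw [hμc] at h1
        have h2 : ∑ k, lam k • w l k
            = (∑ k, lam k) • y l + ε • ∑ k, lam k • u l k := by
          simp only [hw, smul_add, Finset.sum_add_distrib, ← Finset.sum_smul]
          congr 1
          rw [Finset.smul_sum]
          apply Finset.sum_congr rfl
          intro k _
          rw [smul_comm]
        rw [h1, hlam1, one_smul] at h2
        have h3 : ε • ∑ k, lam k • u l k = 0 := (left_eq_add.1 h2)
        exact (smul_eq_zero.1 h3).resolve_left (ne_of_gt hε)
      have hlamconst := hu_dep l lam hlamu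
      intro k
      by_contra hk
      have h0 : lam k = 0 := by rw [hlam]; simp [hk]
      have hall0 : ∀ k', lam k' = 0 := fun k' => (hlamconst k' k).trans h0
      rw [Finset.sum_congr rfl (fun k' _ => hall0 k')] at hlam1
      simp at hlam1
    have hsubset : Finset.image (fun p : Fin n × Fin (m+1) => w p.1 p.2) Finset.univ ⊆ t := by
      intro p hp
      rw [Finset.mem_image] at hp
      obtain ⟨⟨l, k⟩, -, rfl⟩ := hp
      exact hall l k
    have hc1 : n * (m+1) ≤ t.card := by
      calc n * (m+1) = (Finset.univ : Finset (Fin n × Fin (m+1))).card := by simp [mul_comm]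
        _ = (Finset.image (fun p : Fin n × Fin (m+1) => w p.1 p.2) Finset.univ).card :=
            (Finset.card_image_of_injective _ hw_inj).symm
        _ ≤ t.card := Finset.card_le_card hsubset
    have hc2 : t.card ≤ n * (m+1) - 1 := by
      have h := Finset.card_image_le (s := (Finset.univ : Finset (Fin (n*(m+1)-1)))) (f := x)
      simp only [Finset.card_univ, Fintype.card_fin] at h
      rw [ht]
      exact h
    have hpos : 1 ≤ n * (m+1) := Nat.one_le_iff_ne_zero.2 (by positivity)
    omega
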